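/- Let A be a metabelian Lie-admissible algebra with commutator [a,b] = a*b - b*a. Then for all a,b,c,d in A, [[[a,b],c],d] = [[[a,b],d],c]. -/
import Mathlib


/-- Setting: a nonassociative (nonunital) algebra over a field of characteristic 0. -/
theorem stmt_11 {K : Type*} [Field K] [CharZero K]
    {A : Type*} [NonUnitalNonAssocRing A] [Module K A]
    [SMulCommClass K A A] [IsScalarTower K A A]
    (lie_adm : ∀ a b c : A,
      (a*b)*c - (b*a)*c - c*(a*b) + c*(b*a) + (b*c)*a - (c*b)*a - a*(b*c)
        + a*(c*b) + (c*a)*b - (a*c)*b - b*(c*a) + b*(a*c) = 0)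
    (metab : ∀ a b c d : A, (a*b)*(c*d) = 0) :
    let lb : A → A → A := fun a b : A => a*b - b*a
    ∀ a b c d : A, lb (lb (lb a b) c) d = lb (lb (lb a b) d) c := by
  intro lb a b c d
  have h := lie_adm (a*b - b*a) c d
  simp only [sub_mul, mul_sub, metab, sub_zero, zero_sub, sub_self] at h ⊢
  simp only [lb, sub_mul, mul_sub]
  linear_combination (norm := abel1) h
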